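/- In a Wheeler graph, for any pattern P and any index i, letting [s_{i+1}, e_{i+1}] be the interval of vertices reachable by paths labelled P[i+1..m-1], the last vertex (in the Wheeler order) reachable by a path labelled P[i..m-1] is the target of the edge labelled P[i] whose source in [s_{i+1}, e_{i+1}] is maximal among sources in that interval with an outgoing P[i]-edge (choosing, among that source's P[i]-edges, one with maximal target). -/
import Mathlib


/-- A Wheeler graph: a directed multigraph with vertex set `V`, edge set `E`,
edge labels in a totally ordered alphabet `A`, whose (total) Wheeler order on
the vertices satisfies: vertices of in-degree 0 precede those of positive
in-degree, and for edges `e`, `e'` with labels `a`, `a'`: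
if `a ≺ a'` then `tgt e < tgt e'`; if `a = a'` and `src e < src e'` then
`tgt e ≤ tgt e'`. -/
structure WheelerGraph (V E A : Type) [LinearOrder V] [LinearOrder A] where
  src : E → V
  tgt : E → V
  lab : E → A
  indeg0_first : ∀ v w : V, (¬ ∃ e, tgt e = v) → (∃ e, tgt e = w) → v < w
  mono_lt : ∀ e e' : E, lab e < lab e' → tgt e < tgt e'
  mono_eq : ∀ e e' : E, lab e = lab e' → src e < src e' → tgt e ≤ tgt e'

/-- `G.Reach P v` : vertex `v` is reachable by a directed path labelled `P`
(every vertex is reachable by the empty path; backward-search semantics: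
`v` is reachable by `a :: Q` iff `v` is the target of an `a`-labelled edge
whose source is reachable by `Q`). -/
inductive WheelerGraph.Reach {V E A : Type} [LinearOrder V] [LinearOrder A]
    (G : WheelerGraph V E A) : List A → V → Prop
  | nil (v : V) : WheelerGraph.Reach G [] v
  | cons (e : E) {Q : List A} : WheelerGraph.Reach G Q (G.src e) →
      WheelerGraph.Reach G (G.lab e :: Q) (G.tgt e)

/-- `u'` immediately precedes `u` in the Wheeler order. -/
def ImmPred {V : Type} [LinearOrder V] (u' u : V) : Prop :=
  u' < u ∧ ¬ ∃ w, u' < w ∧ w < u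

lemma WheelerGraph.reach_cons_inv {V E A : Type} [LinearOrder V] [LinearOrder A]
    (G : WheelerGraph V E A) {a : A} {Q : List A} {v : V}
    (h : G.Reach (a :: Q) v) :
    ∃ f : E, G.lab f = a ∧ G.tgt f = v ∧ G.Reach Q (G.src f) := by
  generalize hL : a :: Q = L at h
  cases h with
  | nil => exact absurd hL (by simp)
  | cons f hf =>
    obtain ⟨rfl, rfl⟩ := List.cons.inj hL
    exact ⟨f, rfl, rfl, hf⟩

/-- the last vertex reachable by a path labelled `P[i..m-1]` is
the target of the edge labelled `P[i]` whose source is maximal among sources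
in the interval for `P[i+1..m-1]` with an outgoing `P[i]`-edge, chosen among
that source's `P[i]`-edges with maximal target. -/
theorem wheeler_toehold_last {V E A : Type} [LinearOrder V] [LinearOrder A]
    (G : WheelerGraph V E A) (P : List A) (i : ℕ) (hi : i < P.length) (e : E)
    (hlab : G.lab e = P.get ⟨i, hi⟩)
    (hsrc : G.Reach (P.drop (i + 1)) (G.src e))
    (hmax_src : ∀ f : E, G.lab f = P.get ⟨i, hi⟩ →
      G.Reach (P.drop (i + 1)) (G.src f) → G.src f ≤ G.src e)
    (hmax_tgt : ∀ f : E, G.lab f = P.get ⟨i, hi⟩ → G.src f = G.src e →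
      G.tgt f ≤ G.tgt e) :
    G.Reach (P.drop i) (G.tgt e) ∧
      ∀ v : V, G.Reach (P.drop i) v → v ≤ G.tgt e := by
  have hdrop : P.drop i = P.get ⟨i, hi⟩ :: P.drop (i + 1) := by
    rw [List.get_eq_getElem, List.getElem_cons_drop]
  constructor
  · rw [hdrop, ← hlab]
    exact WheelerGraph.Reach.cons e hsrc
  · intro v hv
    rw [hdrop] at hv
    obtain ⟨f, hQ, rfl, hf⟩ := G.reach_cons_inv hv
    have hlf : G.lab f = G.lab e := by rw [hlab, hQ]
    rcases lt_trichotomy (G.src f) (G.src e) with h | h | h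
    · exact G.mono_eq f e hlf h
    · exact hmax_tgt f hQ h
    · exact absurd (hmax_src f hQ hf) (not_le.mpr h)
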